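/- Let W be a finite-dimensional real normed vector space and let α₁, …, αₙ ∈ W* (n ≥ 1). Define ψ : ℂⁿ → W* by ψ(z) = Σᵢ |zᵢ|² · αᵢ. Then ψ is a proper map (the preimage of every compact subset of W* is compact) if and only if the αᵢ are polarized, i.e., there exists ξ ∈ W such that αᵢ(ξ) > 0 for all i = 1, …, n. -/

import Mathlib

set_option maxHeartbeats 1000000

/-- The moment map `ψ(z) = Σᵢ |zᵢ|² αᵢ` of a linear torus action is proper if and only
if the weights `αᵢ` are polarized: there is `ξ` with `αᵢ(ξ) > 0` for all `i`. -/
theorem moment_map_proper_iff_polarized {W : Type*} [NormedAddCommGroup W]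
    [NormedSpace ℝ W] [FiniteDimensional ℝ W] {n : ℕ} (hn : 1 ≤ n)
    (α : Fin n → W →L[ℝ] ℝ)
    (ψ : (Fin n → ℂ) → W →L[ℝ] ℝ)
    (hψ : ψ = fun z => ∑ i, (‖z i‖ ^ 2) • α i) :
    (∀ K : Set (W →L[ℝ] ℝ), IsCompact K → IsCompact (ψ ⁻¹' K)) ↔
      ∃ ξ : W, ∀ i, 0 < α i ξ := by
  subst hψ
  have hne : Nonempty (Fin n) := ⟨⟨0, hn⟩⟩
  have hcont : Continuous fun z : Fin n → ℂ => ∑ i, (‖z i‖ ^ 2) • α i := by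
    refine continuous_finset_sum _ fun i _ => ?_
    exact ((continuous_norm.comp (continuous_apply i)).pow 2).smul continuous_const
  constructor
  · -- proper → polarized
    intro hproper
    -- the image of the standard simplex
    set S : Set (W →L[ℝ] ℝ) :=
      (fun t : Fin n → ℝ => ∑ i, t i • α i) '' stdSimplex ℝ (Fin n) with hS
    have hScont : Continuous fun t : Fin n → ℝ => ∑ i, t i • α i := by
      refine continuous_finset_sum _ fun i _ => ?_
      exact (continuous_apply i).smul continuous_const
    have hSconv : Convex ℝ S := by
      have : IsLinearMap ℝ fun t : Fin n → ℝ => ∑ i, t i • α i := by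
        constructor
        · intro x y; simp [add_smul, Finset.sum_add_distrib]
        · intro c x; simp [Finset.smul_sum, smul_smul]
      exact (convex_stdSimplex ℝ (Fin n)).is_linear_image this
    have hSc : IsCompact S := (isCompact_stdSimplex ℝ (Fin n)).image hScont
    -- 0 ∉ S, else the fiber over 0 is unbounded
    have h0 : (0 : W →L[ℝ] ℝ) ∉ S := by
      rintro ⟨t, ⟨ht0, ht1⟩, htz⟩
      obtain ⟨i₀, hi₀⟩ : ∃ i, t i ≠ 0 := by
        by_contra h; push_neg at h
        simp [h] at ht1
      have hti₀ : 0 < t i₀ := lt_of_le_of_ne (ht0 i₀) (Ne.symm hi₀)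
      have hcpt := hproper {0} isCompact_singleton
      obtain ⟨R, hR⟩ := isBounded_iff_forall_norm_le.1 hcpt.isBounded
      set s : ℝ := (max R 0 + 1) ^ 2 / t i₀ with hs
      have hs0 : 0 ≤ s := div_nonneg (by positivity) hti₀.le
      set z : Fin n → ℂ := fun i => ((Real.sqrt (s * t i) : ℝ) : ℂ) with hz
      have habs : ∀ i, ‖z i‖ ^ 2 = s * t i := by
        intro i
        have h1 : 0 ≤ s * t i := mul_nonneg hs0 (ht0 i)
        simp [hz, Complex.norm_real, abs_of_nonneg (Real.sqrt_nonneg _),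
          Real.sq_sqrt h1]
      have hmem : z ∈ (fun z : Fin n → ℂ =>
          ∑ i, (‖z i‖ ^ 2) • α i) ⁻¹' {0} := by
        simp only [Set.mem_preimage, Set.mem_singleton_iff]
        calc ∑ i, (‖z i‖ ^ 2) • α i = ∑ i, (s * t i) • α i := by
              simp only [habs]
          _ = s • ∑ i, t i • α i := by
              rw [Finset.smul_sum]; simp [smul_smul]
          _ = 0 := by
              have htz' : ∑ i, t i • α i = 0 := htz
              rw [htz', smul_zero]
      have hb := hR z hmem
      have hnorm : ‖z i₀‖ ≤ ‖z‖ := norm_le_pi_norm z i₀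
      have hzn : ‖z i₀‖ ^ 2 = (max R 0 + 1) ^ 2 := by
        have hst : s * t i₀ = (max R 0 + 1) ^ 2 := by rw [hs]; field_simp
        rw [habs i₀, hst]
      have h1 : ‖z i₀‖ ≤ max R 0 := le_trans (hnorm.trans hb) (le_max_left R 0)
      have h2 : ‖z i₀‖ ^ 2 ≤ (max R 0) ^ 2 := pow_le_pow_left₀ (norm_nonneg _) h1 2
      nlinarith [le_max_right R 0]
    -- separate 0 from S
    obtain ⟨f, u, hfu, hub⟩ :=
      geometric_hahn_banach_point_closed hSconv hSc.isClosed h0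
    have hu0 : 0 < u := by simpa using hfu
    -- turn f into evaluation at a vector ξ
    set f' : Module.Dual ℝ (Module.Dual ℝ W) :=
      f.toLinearMap.comp
        (LinearMap.toContinuousLinearMap : (W →ₗ[ℝ] ℝ) ≃ₗ[ℝ] (W →L[ℝ] ℝ)).toLinearMap
      with hf'
    refine ⟨(Module.evalEquiv ℝ W).symm f', fun i => ?_⟩
    have hαS : α i ∈ S := by
      refine ⟨Pi.single i 1, single_mem_stdSimplex ℝ i, ?_⟩
      simp [Pi.single_apply, ite_smul]
    have hfi : u < f (α i) := hub _ hαS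
    have key : (α i) ((Module.evalEquiv ℝ W).symm f') = f (α i) := by
      have h1 : ((α i : W →ₗ[ℝ] ℝ)) ((Module.evalEquiv ℝ W).symm f')
          = f' ((α i : W →ₗ[ℝ] ℝ)) :=
        Module.apply_evalEquiv_symm_apply (R := ℝ) (M := W) ((α i : W →ₗ[ℝ] ℝ)) f'
      have h2 : LinearMap.toContinuousLinearMap ((α i) : W →ₗ[ℝ] ℝ) = α i :=
        ContinuousLinearMap.coe_injective (by simp)
      calc (α i) ((Module.evalEquiv ℝ W).symm f')
          = ((α i : W →ₗ[ℝ] ℝ)) ((Module.evalEquiv ℝ W).symm f') := rfl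
        _ = f' ((α i : W →ₗ[ℝ] ℝ)) := h1
        _ = f (LinearMap.toContinuousLinearMap ((α i) : W →ₗ[ℝ] ℝ)) := rfl
        _ = f (α i) := by rw [h2]
    rw [key]
    linarith
  · -- polarized → proper
    rintro ⟨ξ, hξ⟩ K hK
    have hclosed : IsClosed ((fun z : Fin n → ℂ =>
        ∑ i, (‖z i‖ ^ 2) • α i) ⁻¹' K) := hK.isClosed.preimage hcont
    -- bound on evaluation at ξ over K
    have hKb : IsCompact ((fun g : W →L[ℝ] ℝ => g ξ) '' K) :=
      hK.image (ContinuousLinearMap.apply ℝ ℝ ξ).continuous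
    obtain ⟨M, hM⟩ := isBounded_iff_forall_norm_le.1 hKb.isBounded
    set c : ℝ := Finset.univ.inf' Finset.univ_nonempty (fun i => α i ξ) with hc
    have hc0 : 0 < c := by
      rw [hc, Finset.lt_inf'_iff]
      exact fun i _ => hξ i
    refine Metric.isCompact_of_isClosed_isBounded hclosed ?_
    rw [isBounded_iff_forall_norm_le]
    refine ⟨Real.sqrt (M / c), fun z hz => ?_⟩
    have hval : (∑ i, (‖z i‖ ^ 2) • α i) ξ ≤ M := by
      have := hM _ ⟨_, hz, rfl⟩
      exact (le_abs_self _).trans (by simpa [Real.norm_eq_abs] using this)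
    have hsum : ∑ i, ‖z i‖ ^ 2 * (α i ξ) ≤ M := by
      simpa [ContinuousLinearMap.sum_apply, ContinuousLinearMap.smul_apply,
        smul_eq_mul] using hval
    rw [pi_norm_le_iff_of_nonneg (Real.sqrt_nonneg _)]
    intro i
    have h1 : ‖z i‖ ^ 2 * c ≤ M := by
      refine le_trans ?_ hsum
      calc ‖z i‖ ^ 2 * c ≤ ‖z i‖ ^ 2 * (α i ξ) := by
            refine mul_le_mul_of_nonneg_left ?_ (by positivity)
            exact Finset.inf'_le _ (Finset.mem_univ i)
        _ ≤ ∑ j, ‖z j‖ ^ 2 * (α j ξ) := by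
            refine Finset.single_le_sum (f := fun j => ‖z j‖ ^ 2 * (α j ξ)) (fun j _ => ?_) (Finset.mem_univ i)
            exact mul_nonneg (by positivity) (hξ j).le
    have h2 : ‖z i‖ ^ 2 ≤ M / c := (le_div_iff₀ hc0).2 h1
    exact Real.le_sqrt_of_sq_le h2
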